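/- Uniform-sampling Nyström error bound: if A is psd with all diagonal entries equal to 1 and pivots s₁,…,s_k are drawn i.i.d. uniformly from {1,…,N}, the expected trace-norm error of the resulting Nyström approximation Â⁽ᵏ⁾ satisfies E[tr(A - Â⁽ᵏ⁾)] ≤ (r-1)/k · tr(A) + (1 + 1/k) · tr(A - ⟦A⟧_r) for every r ≥ 1. -/

import Mathlib

open Matrix

lemma sum_eval {Nn : ℕ} {ι : Type*} [Fintype ι] [DecidableEq ι] (m : ι) (f : Fin Nn → ℝ) :
    ∑ v : ι → Fin Nn, f (v m) = (Nn : ℝ) ^ (Fintype.card ι - 1) * ∑ t, f t := by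
  rw [← (Equiv.funSplitAt m (Fin Nn)).symm.sum_comp (fun v => f (v m))]
  simp only [Equiv.funSplitAt, Equiv.piSplitAt_symm_apply, dif_pos rfl]
  rw [Fintype.sum_prod_type]
  simp [Finset.sum_const, Fintype.card_fun, Fintype.card_subtype_compl,
    Fintype.card_subtype_eq, mul_comm, Finset.sum_mul]

lemma sum_eval2 {Nn k : ℕ} (m m' : Fin k) (hmm : m ≠ m') (F : Fin Nn → Fin Nn → ℝ) :
    ∑ v : Fin k → Fin Nn, F (v m) (v m') = (Nn : ℝ) ^ (k - 2) * ∑ s, ∑ t, F s t := by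
  rw [← (Equiv.funSplitAt m (Fin Nn)).symm.sum_comp (fun v => F (v m) (v m'))]
  simp only [Equiv.funSplitAt, Equiv.piSplitAt_symm_apply, dif_pos rfl, dif_neg hmm.symm]
  rw [Fintype.sum_prod_type]
  have : ∀ x : Fin Nn, ∑ w : {j : Fin k // j ≠ m} → Fin Nn, F x (w ⟨m', hmm.symm⟩)
      = (Nn : ℝ) ^ (k - 2) * ∑ t, F x t := by
    intro x
    rw [sum_eval (⟨m', hmm.symm⟩ : {j : Fin k // j ≠ m}) (fun t => F x t)]
    congr 2
    simp [Fintype.card_subtype_compl, Fintype.card_subtype_eq, Nat.sub_sub]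
  simp only [dif_pos trivial] at this ⊢
  simp only [this]
  rw [Finset.mul_sum]

section Penrose
variable {n : Type*} [Fintype n] [DecidableEq n]

lemma penrose_unique (M P Q : Matrix n n ℝ)
    (hP1 : M * P * M = M) (hP3 : (M * P)ᵀ = M * P) (hP4 : (P * M)ᵀ = P * M)
    (hP2 : P * M * P = P)
    (hQ1 : M * Q * M = M) (hQ3 : (M * Q)ᵀ = M * Q) (hQ4 : (Q * M)ᵀ = Q * M)
    (hQ2 : Q * M * Q = Q) : P = Q := by
  have hQ1' : M * (Q * M) = M := by rw [← mul_assoc, hQ1]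
  have h1 : M * P = M * Q := by
    calc M * P = (M * P)ᵀ := hP3.symm
    _ = Pᵀ * Mᵀ := by rw [Matrix.transpose_mul]
    _ = Pᵀ * (M * Q * M)ᵀ := by rw [hQ1]
    _ = Pᵀ * (Mᵀ * (M * Q)ᵀ) := by rw [Matrix.transpose_mul (M * Q) M]
    _ = Pᵀ * (Mᵀ * (M * Q)) := by rw [hQ3]
    _ = (Pᵀ * Mᵀ) * (M * Q) := by rw [mul_assoc]
    _ = (M * P)ᵀ * (M * Q) := by rw [Matrix.transpose_mul]
    _ = (M * P) * (M * Q) := by rw [hP3]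
    _ = (M * P * M) * Q := by noncomm_ring
    _ = M * Q := by rw [hP1]
  have h2 : P * M = Q * M := by
    calc P * M = (P * M)ᵀ := hP4.symm
    _ = Mᵀ * Pᵀ := by rw [Matrix.transpose_mul]
    _ = (M * (Q * M))ᵀ * Pᵀ := by rw [hQ1']
    _ = ((Q * M)ᵀ * Mᵀ) * Pᵀ := by rw [Matrix.transpose_mul]
    _ = ((Q * M) * Mᵀ) * Pᵀ := by rw [hQ4]
    _ = (Q * M) * (Mᵀ * Pᵀ) := by rw [mul_assoc]
    _ = (Q * M) * (P * M)ᵀ := by rw [Matrix.transpose_mul]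
    _ = (Q * M) * (P * M) := by rw [hP4]
    _ = Q * (M * P * M) := by noncomm_ring
    _ = Q * M := by rw [hP1]
  calc P = P * M * P := hP2.symm
  _ = Q * M * P := by rw [h2]
  _ = Q * (M * P) := by rw [mul_assoc]
  _ = Q * (M * Q) := by rw [h1]
  _ = Q * M * Q := by rw [mul_assoc]
  _ = Q := hQ2

lemma penrose_symm (M P : Matrix n n ℝ) (hM : Mᵀ = M)
    (hP1 : M * P * M = M) (hP2 : P * M * P = P)
    (hP3 : (M * P)ᵀ = M * P) (hP4 : (P * M)ᵀ = P * M) : Pᵀ = P := by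
  have hMPt : M * Pᵀ = P * M := by
    calc M * Pᵀ = Mᵀ * Pᵀ := by rw [hM]
    _ = (P * M)ᵀ := (Matrix.transpose_mul _ _).symm
    _ = P * M := hP4
  have hPtM : Pᵀ * M = M * P := by
    calc Pᵀ * M = Pᵀ * Mᵀ := by rw [hM]
    _ = (M * P)ᵀ := (Matrix.transpose_mul _ _).symm
    _ = M * P := hP3
  have hQ1 : M * Pᵀ * M = M := by
    have h : (M * Pᵀ * M)ᵀ = M := by
      rw [Matrix.transpose_mul, Matrix.transpose_mul, Matrix.transpose_transpose, hM,
        ← mul_assoc, hP1]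
    rw [← Matrix.transpose_transpose (M * Pᵀ * M), h, hM]
  have hQ2 : Pᵀ * M * Pᵀ = Pᵀ := by
    have h : (Pᵀ * M * Pᵀ)ᵀ = P := by
      rw [Matrix.transpose_mul, Matrix.transpose_mul, Matrix.transpose_transpose, hM,
        ← mul_assoc, hP2]
    rw [← Matrix.transpose_transpose (Pᵀ * M * Pᵀ), h]
  have hQ3 : (M * Pᵀ)ᵀ = M * Pᵀ := by rw [hMPt]; exact hP4
  have hQ4 : (Pᵀ * M)ᵀ = Pᵀ * M := by rw [hPtM]; exact hP3
  exact (penrose_unique M P Pᵀ hP1 hP3 hP4 hP2 hQ1 hQ3 hQ4 hQ2).symm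
end Penrose

lemma proj_props {m ι : Type*} [Fintype m] [Fintype ι]
    (C : Matrix m ι ℝ) (M : Matrix ι ι ℝ) (Pm : Matrix ι ι ℝ)
    (hMC : M = Cᵀ * C) (hPsym : Pmᵀ = Pm)
    (hP1 : M * Pm * M = M) (hP2 : Pm * M * Pm = Pm) :
    (C * Pm * Cᵀ)ᵀ = C * Pm * Cᵀ ∧ (C * Pm * Cᵀ) * (C * Pm * Cᵀ) = C * Pm * Cᵀ ∧
      (C * Pm * Cᵀ) * C = C := by
  have hMt : Mᵀ = M := by rw [hMC, Matrix.transpose_mul, Matrix.transpose_transpose]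
  have hXt : (C * Pm * M - C)ᵀ = M * Pm * Cᵀ - Cᵀ := by
    rw [Matrix.transpose_sub, Matrix.transpose_mul, Matrix.transpose_mul, hPsym, hMt,
      ← Matrix.mul_assoc]
  have h6 : M * Pm * Cᵀ * C = M := by
    calc M * Pm * Cᵀ * C = M * Pm * (Cᵀ * C) := Matrix.mul_assoc (M * Pm) Cᵀ C
    _ = M * Pm * M := by rw [← hMC]
    _ = M := hP1
  have h7 : Cᵀ * (C * Pm * M) = M := by
    calc Cᵀ * (C * Pm * M) = Cᵀ * (C * (Pm * M)) := by rw [Matrix.mul_assoc C Pm M]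
    _ = Cᵀ * C * (Pm * M) := (Matrix.mul_assoc Cᵀ C (Pm * M)).symm
    _ = M * (Pm * M) := by rw [← hMC]
    _ = M * Pm * M := (Matrix.mul_assoc M Pm M).symm
    _ = M := hP1
  have h5 : M * Pm * Cᵀ * (C * Pm * M) = M := by
    calc M * Pm * Cᵀ * (C * Pm * M)
        = M * Pm * Cᵀ * (C * (Pm * M)) := by rw [Matrix.mul_assoc C Pm M]
    _ = M * Pm * Cᵀ * C * (Pm * M) := (Matrix.mul_assoc (M * Pm * Cᵀ) C (Pm * M)).symm
    _ = M * (Pm * M) := by rw [h6]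
    _ = M * Pm * M := (Matrix.mul_assoc M Pm M).symm
    _ = M := hP1
  have hX : C * Pm * M - C = 0 := by
    rw [← Matrix.conjTranspose_mul_self_eq_zero (A := C * Pm * M - C)]
    show (C * Pm * M - C)ᵀ * (C * Pm * M - C) = 0
    rw [hXt, Matrix.sub_mul, Matrix.mul_sub, Matrix.mul_sub, h5, h6, h7, ← hMC]
    abel
  have hC : C * Pm * M = C := by rwa [sub_eq_zero] at hX
  refine ⟨?_, ?_, ?_⟩
  · rw [Matrix.transpose_mul, Matrix.transpose_mul, Matrix.transpose_transpose, hPsym,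
      ← Matrix.mul_assoc]
  · calc C * Pm * Cᵀ * (C * Pm * Cᵀ)
        = C * Pm * Cᵀ * (C * (Pm * Cᵀ)) := by rw [Matrix.mul_assoc C Pm Cᵀ]
    _ = C * Pm * Cᵀ * C * (Pm * Cᵀ) := (Matrix.mul_assoc _ C (Pm * Cᵀ)).symm
    _ = C * Pm * (Cᵀ * C) * (Pm * Cᵀ) := by rw [Matrix.mul_assoc (C * Pm) Cᵀ C]
    _ = C * Pm * M * (Pm * Cᵀ) := by rw [← hMC]
    _ = C * (Pm * M) * (Pm * Cᵀ) := by rw [Matrix.mul_assoc C Pm M]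
    _ = C * ((Pm * M) * (Pm * Cᵀ)) := Matrix.mul_assoc _ _ _
    _ = C * ((Pm * M) * Pm * Cᵀ) := by rw [Matrix.mul_assoc (Pm * M) Pm Cᵀ]
    _ = C * (Pm * Cᵀ) := by rw [hP2]
    _ = C * Pm * Cᵀ := (Matrix.mul_assoc C Pm Cᵀ).symm
  · calc C * Pm * Cᵀ * C = C * Pm * (Cᵀ * C) := Matrix.mul_assoc _ _ _
    _ = C * Pm * M := by rw [← hMC]
    _ = C := hC

lemma trace_mul_diag {n : Type*} [Fintype n] [DecidableEq n] (X : Matrix n n ℝ) (d : n → ℝ) :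
    (X * diagonal d).trace = ∑ j, X j j * d j := by
  simp [Matrix.trace, Matrix.diag, Matrix.mul_apply, Matrix.diagonal_apply, mul_ite,
    Finset.sum_ite_eq']

/-- Sum of the `r` largest eigenvalues (Ky Fan). Junk value for non-Hermitian matrices. -/
noncomputable def sumTopEig {N : ℕ} (A : Matrix (Fin N) (Fin N) ℝ) (r : ℕ) : ℝ :=
  if hA : A.IsHermitian then
    ⨆ s : {s : Finset (Fin N) // s.card = r}, ∑ i ∈ s.1, hA.eigenvalues i
  else 0

/-- `tr(M - ⟦M⟧_r)`: the sum of all eigenvalues of `M` beyond the `r` largest. -/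
noncomputable def tailSum {N : ℕ} (A : Matrix (Fin N) (Fin N) ℝ) (r : ℕ) : ℝ :=
  A.trace - sumTopEig A r

/-- The principal submatrix `A(S,S)`. -/
def subSS {N : ℕ} (A : Matrix (Fin N) (Fin N) ℝ) (S : Finset (Fin N)) :
    Matrix {x // x ∈ S} {x // x ∈ S} ℝ :=
  A.submatrix Subtype.val Subtype.val

/-- The column submatrix `A(:,S)`. -/
def subCols {N : ℕ} (A : Matrix (Fin N) (Fin N) ℝ) (S : Finset (Fin N)) :
    Matrix (Fin N) {x // x ∈ S} ℝ :=
  A.submatrix id Subtype.val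

/-- The row submatrix `A(S,:)`. -/
def subRows {N : ℕ} (A : Matrix (Fin N) (Fin N) ℝ) (S : Finset (Fin N)) :
    Matrix {x // x ∈ S} (Fin N) ℝ :=
  A.submatrix Subtype.val id

/-- Uniform-sampling Nyström error bound: if `A` is psd with unit diagonal and `k` pivots
are drawn i.i.d. uniformly from `{1,…,N}`, then
`E[tr(A - Â⁽ᵏ⁾)] ≤ (r-1)/k · tr A + (1 + 1/k) · tr(A - ⟦A⟧_r)`.
The pseudoinverse `A(S,S)†` of each principal submatrix is supplied as a family `P`
satisfying the four Penrose conditions. -/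
theorem uniform_sampling_nystrom_bound {N k r : ℕ} (hN : 0 < N) (hk : 0 < k) (hr : 1 ≤ r)
    (A : Matrix (Fin N) (Fin N) ℝ) (hA : A.PosSemidef) (hdiag : ∀ i, A i i = 1)
    (P : (S : Finset (Fin N)) → Matrix {x // x ∈ S} {x // x ∈ S} ℝ)
    (hP1 : ∀ S, subSS A S * P S * subSS A S = subSS A S)
    (hP2 : ∀ S, P S * subSS A S * P S = P S)
    (hP3 : ∀ S, (subSS A S * P S)ᵀ = subSS A S * P S)
    (hP4 : ∀ S, (P S * subSS A S)ᵀ = P S * subSS A S) :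
    (1 / (N : ℝ) ^ k) * ∑ v : Fin k → Fin N,
        (A - subCols A (Finset.image v Finset.univ) * P (Finset.image v Finset.univ) *
          subRows A (Finset.image v Finset.univ)).trace
      ≤ ((r : ℝ) - 1) / k * A.trace + (1 + 1 / (k : ℝ)) * tailSum A r := by
  classical
  have hNR : (0:ℝ) < N := by exact_mod_cast hN
  have hkR : (0:ℝ) < k := by exact_mod_cast hk
  have hNk : (0:ℝ) < (N:ℝ)^k := pow_pos hNR k
  -- ## spectral setup
  have hH : A.IsHermitian := hA.1
  set lam : Fin N → ℝ := hH.eigenvalues with hlam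
  have hlam0 : ∀ j, 0 ≤ lam j := fun j => hA.eigenvalues_nonneg j
  set V : Matrix (Fin N) (Fin N) ℝ := (hH.eigenvectorUnitary : Matrix (Fin N) (Fin N) ℝ) with hV
  have hVV : Vᵀ * V = 1 := by
    have := (Matrix.mem_unitaryGroup_iff').mp hH.eigenvectorUnitary.2
    simpa [star_eq_conjTranspose] using this
  have hVV' : V * Vᵀ = 1 := by
    have := (Matrix.mem_unitaryGroup_iff).mp hH.eigenvectorUnitary.2
    simpa [star_eq_conjTranspose] using this
  have hspec : A = V * diagonal lam * Vᵀ := by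
    have := hH.spectral_theorem
    simpa [star_eq_conjTranspose] using this
  set B : Matrix (Fin N) (Fin N) ℝ := V * diagonal (fun j => Real.sqrt (lam j)) * Vᵀ with hB
  have hBsym : Bᵀ = B := by
    rw [hB, Matrix.transpose_mul, Matrix.transpose_mul, Matrix.transpose_transpose,
      Matrix.diagonal_transpose, Matrix.mul_assoc]
  have hmid : ∀ (X : Matrix (Fin N) (Fin N) ℝ), Vᵀ * (V * X) = X := fun X => by
    rw [← Matrix.mul_assoc, hVV, Matrix.one_mul]
  have hsq : ∀ j, Real.sqrt (lam j) * Real.sqrt (lam j) = lam j :=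
    fun j => Real.mul_self_sqrt (hlam0 j)
  have hBB : B * B = A := by
    rw [hB, hspec]
    simp only [Matrix.mul_assoc]
    rw [hmid, ← Matrix.mul_assoc (diagonal _) (diagonal _) Vᵀ, Matrix.diagonal_mul_diagonal,
      funext hsq]
  have hBV : B * V = V * diagonal (fun j => Real.sqrt (lam j)) := by
    rw [hB, Matrix.mul_assoc, hVV, Matrix.mul_one]
  have hAV : A * V = V * diagonal lam := by
    rw [hspec, Matrix.mul_assoc, hVV, Matrix.mul_one]
  have hAt : Aᵀ = A := hH
  have hBe : ∀ i t, B i t = B t i := fun i t => (congrFun (congrFun hBsym i) t).symm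
  -- eigenvector columns
  set u : Fin N → Fin N → ℝ := fun j i => V i j with hu
  have hgg : ∀ j, ∑ i, u j i * u j i = 1 := by
    intro j
    have := congrFun (congrFun hVV j) j
    simpa [Matrix.mul_apply, Matrix.one_apply] using this
  have hBu : ∀ j t, ∑ i, u j i * B i t = Real.sqrt (lam j) * u j t := by
    intro j t
    have := congrFun (congrFun hBV t) j
    rw [Matrix.mul_diagonal, Matrix.mul_apply] at this
    calc ∑ i, u j i * B i t = ∑ i, B t i * V i j := by
          refine Finset.sum_congr rfl fun i _ => ?_
          rw [hBe i t]; ring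
    _ = Real.sqrt (lam j) * u j t := by rw [this]; ring
  have hAu : ∀ j t, ∑ i, A t i * u j i = lam j * u j t := by
    intro j t
    have := congrFun (congrFun hAV t) j
    rw [Matrix.mul_diagonal, Matrix.mul_apply] at this
    rw [this]; ring
  have hgAg : ∀ j, ∑ s, ∑ t, u j s * u j t * A s t = lam j := by
    intro j
    calc ∑ s, ∑ t, u j s * u j t * A s t = ∑ s, u j s * (∑ t, A s t * u j t) := by
          refine Finset.sum_congr rfl fun s _ => ?_
          rw [Finset.mul_sum]
          refine Finset.sum_congr rfl fun t _ => by ring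
    _ = ∑ s, u j s * (lam j * u j s) := by
          refine Finset.sum_congr rfl fun s _ => by rw [hAu j s]
    _ = lam j * ∑ s, u j s * u j s := by rw [Finset.mul_sum]; exact Finset.sum_congr rfl fun s _ => by ring
    _ = lam j := by rw [hgg j, mul_one]
  have htrA : A.trace = (N:ℝ) := by
    simp [Matrix.trace, Matrix.diag, hdiag]
  have hsumlam : ∑ j, lam j = (N:ℝ) := by
    have h1 : A.trace = ∑ j, lam j := by
      conv_lhs => rw [hspec]
      rw [Matrix.trace_mul_comm, hmid, Matrix.trace_diagonal]
    rw [← h1, htrA]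
  -- ## submatrix and projection facts
  have hCt : ∀ Sf : Finset (Fin N), (subCols B Sf)ᵀ = subRows B Sf := by
    intro Sf
    rw [subCols, subRows, Matrix.transpose_submatrix, hBsym]
  have hMt : ∀ Sf, (subSS A Sf)ᵀ = subSS A Sf := fun Sf => by
    rw [subSS, Matrix.transpose_submatrix, hAt]
  have hMC : ∀ Sf, subSS A Sf = (subCols B Sf)ᵀ * subCols B Sf := by
    intro Sf
    rw [hCt, subRows, subCols, subSS, ← hBB,
      Matrix.submatrix_mul B B Subtype.val id Subtype.val Function.bijective_id]
  have hPsym : ∀ Sf, (P Sf)ᵀ = P Sf := fun Sf =>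
    penrose_symm _ _ (hMt Sf) (hP1 Sf) (hP2 Sf) (hP3 Sf) (hP4 Sf)
  have hproj := fun Sf => proj_props (subCols B Sf) (subSS A Sf) (P Sf) (hMC Sf) (hPsym Sf)
    (hP1 Sf) (hP2 Sf)
  set Pr : Finset (Fin N) → Matrix (Fin N) (Fin N) ℝ :=
    fun Sf => subCols B Sf * P Sf * (subCols B Sf)ᵀ with hPrdef
  have hPrSym : ∀ Sf, (Pr Sf)ᵀ = Pr Sf := fun Sf => (hproj Sf).1
  have hPrIdem : ∀ Sf, Pr Sf * Pr Sf = Pr Sf := fun Sf => (hproj Sf).2.1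
  have hPrC : ∀ Sf, Pr Sf * subCols B Sf = subCols B Sf := fun Sf => (hproj Sf).2.2
  have hPrPsd : ∀ Sf, (Pr Sf).PosSemidef := by
    intro Sf
    have h := Matrix.posSemidef_conjTranspose_mul_self (Pr Sf)
    rw [show (Pr Sf)ᴴ = (Pr Sf)ᵀ from rfl, hPrSym, hPrIdem] at h
    exact h
  set QS : Finset (Fin N) → Matrix (Fin N) (Fin N) ℝ := fun Sf => 1 - Pr Sf with hQSdef
  have hQsym : ∀ Sf, (QS Sf)ᵀ = QS Sf := by
    intro Sf
    rw [hQSdef, Matrix.transpose_sub, Matrix.transpose_one, hPrSym]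
  have hQidem : ∀ Sf, QS Sf * QS Sf = QS Sf := by
    intro Sf
    show (1 - Pr Sf) * (1 - Pr Sf) = 1 - Pr Sf
    obtain ⟨X, hX, hXX⟩ : ∃ X, X = Pr Sf ∧ X * X = X := ⟨Pr Sf, rfl, hPrIdem Sf⟩
    rw [← hX, Matrix.sub_mul, Matrix.mul_sub, Matrix.mul_sub, hXX]
    simp only [Matrix.one_mul, Matrix.mul_one]
    abel
  have hQpsd : ∀ Sf, (QS Sf).PosSemidef := by
    intro Sf
    have h := Matrix.posSemidef_conjTranspose_mul_self (QS Sf)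
    rw [show (QS Sf)ᴴ = (QS Sf)ᵀ from rfl, hQsym, hQidem] at h
    exact h
  have hstar : ∀ (y : Fin N → ℝ), star y = y := fun y => rfl
  have hQb : ∀ (Sf : Finset (Fin N)) (t : Fin N), t ∈ Sf → (QS Sf) *ᵥ (fun i => B i t) = 0 := by
    intro Sf t ht
    have h0 : QS Sf * subCols B Sf = 0 := by
      rw [hQSdef]
      rw [Matrix.sub_mul, Matrix.one_mul, hPrC]
      exact sub_self _
    funext i
    have := congrFun (congrFun h0 i) ⟨t, ht⟩
    simpa [Matrix.mulVec, dotProduct, Matrix.mul_apply, subCols] using this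
  -- ## trace identity per pivot set
  have hColsA : ∀ Sf, subCols A Sf = B * subCols B Sf := fun Sf => by
    rw [subCols, subCols, ← hBB,
      Matrix.submatrix_mul B B id id Subtype.val Function.bijective_id, Matrix.submatrix_id_id]
  have hRowsA : ∀ Sf, subRows A Sf = (subCols B Sf)ᵀ * B := fun Sf => by
    rw [hCt, subRows, subRows, ← hBB,
      Matrix.submatrix_mul B B Subtype.val id id Function.bijective_id, Matrix.submatrix_id_id]
  have htr : ∀ Sf, (A - subCols A Sf * P Sf * subRows A Sf).trace = ((QS Sf) * A).trace := by
    intro Sf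
    have hNys : subCols A Sf * P Sf * subRows A Sf = B * Pr Sf * B := by
      rw [hColsA Sf, hRowsA Sf]
      calc B * subCols B Sf * P Sf * ((subCols B Sf)ᵀ * B)
          = B * (subCols B Sf * P Sf) * ((subCols B Sf)ᵀ * B) := by
            rw [Matrix.mul_assoc B (subCols B Sf) (P Sf)]
      _ = B * ((subCols B Sf * P Sf) * ((subCols B Sf)ᵀ * B)) := Matrix.mul_assoc _ _ _
      _ = B * ((subCols B Sf * P Sf) * (subCols B Sf)ᵀ * B) := by
            rw [Matrix.mul_assoc (subCols B Sf * P Sf) (subCols B Sf)ᵀ B]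
      _ = B * Pr Sf * B := by rw [← Matrix.mul_assoc]
    rw [hNys]
    have h2 : (B * Pr Sf * B).trace = (Pr Sf * A).trace := by
      rw [Matrix.trace_mul_comm (B * Pr Sf) B, ← Matrix.mul_assoc, hBB,
        Matrix.trace_mul_comm A (Pr Sf)]
    have h3 : (QS Sf * A).trace = A.trace - (Pr Sf * A).trace := by
      show ((1 - Pr Sf) * A).trace = _
      rw [Matrix.sub_mul, Matrix.one_mul, Matrix.trace_sub]
    rw [Matrix.trace_sub, h2, h3]
  have hexp : ∀ (W : Matrix (Fin N) (Fin N) ℝ),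
      (W * A).trace = ∑ j, lam j * (u j ⬝ᵥ (W *ᵥ u j)) := by
    intro W
    have h1 : (W * A).trace = ∑ i, ∑ l, W i l * A l i := by
      simp [Matrix.trace, Matrix.diag, Matrix.mul_apply]
    have hAe : ∀ l i, A l i = ∑ j, V l j * (lam j * V i j) := by
      intro l i
      conv_lhs => rw [hspec]
      rw [Matrix.mul_apply]
      refine Finset.sum_congr rfl fun j _ => ?_
      rw [Matrix.mul_diagonal, Matrix.transpose_apply]
      ring
    rw [h1]
    calc ∑ i, ∑ l, W i l * A l i
        = ∑ i, ∑ l, ∑ j, W i l * (V l j * (lam j * V i j)) := by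
          refine Finset.sum_congr rfl fun i _ => Finset.sum_congr rfl fun l _ => ?_
          rw [hAe l i, Finset.mul_sum]
    _ = ∑ i, ∑ j, ∑ l, W i l * (V l j * (lam j * V i j)) := by
          refine Finset.sum_congr rfl fun i _ => ?_
          exact Finset.sum_comm
    _ = ∑ j, ∑ i, ∑ l, W i l * (V l j * (lam j * V i j)) := Finset.sum_comm
    _ = ∑ j, lam j * (u j ⬝ᵥ (W *ᵥ u j)) := by
          refine Finset.sum_congr rfl fun j _ => ?_
          have hdp : u j ⬝ᵥ (W *ᵥ u j) = ∑ i, V i j * ∑ l, W i l * V l j := rfl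
          rw [hdp, Finset.mul_sum]
          refine Finset.sum_congr rfl fun i _ => ?_
          rw [Finset.mul_sum, Finset.mul_sum]
          refine Finset.sum_congr rfl fun l _ => by ring
  set q : Fin N → (Fin k → Fin N) → ℝ :=
    fun j v => u j ⬝ᵥ ((QS (Finset.image v Finset.univ)) *ᵥ u j) with hqdef
  have hq0 : ∀ j v, 0 ≤ q j v := by
    intro j v
    have h := (hQpsd (Finset.image v Finset.univ)).dotProduct_mulVec_nonneg (u j)
    rw [hstar] at h
    exact h
  have hq1 : ∀ j v, q j v ≤ 1 := by
    intro j v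
    have hpi : 0 ≤ u j ⬝ᵥ (Pr (Finset.image v Finset.univ) *ᵥ u j) := by
      have := (hPrPsd (Finset.image v Finset.univ)).dotProduct_mulVec_nonneg (u j)
      rwa [hstar] at this
    have : q j v = 1 - u j ⬝ᵥ (Pr (Finset.image v Finset.univ) *ᵥ u j) := by
      show u j ⬝ᵥ ((1 - Pr (Finset.image v Finset.univ)) *ᵥ u j)
        = 1 - u j ⬝ᵥ (Pr (Finset.image v Finset.univ) *ᵥ u j)
      rw [Matrix.sub_mulVec, dotProduct_sub, Matrix.one_mulVec]
      have huu : u j ⬝ᵥ u j = 1 := hgg j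
      rw [huu]
    rw [this]
    linarith
  -- ## main per-eigenvector expectation bound
  have mv_sum : ∀ (M : Matrix (Fin N) (Fin N) ℝ) (f : Fin k → (Fin N → ℝ)),
      M *ᵥ (∑ m, f m) = ∑ m, M *ᵥ (f m) := by
    intro M f
    rw [← Matrix.mulVecLin_apply, map_sum]
    simp [Matrix.mulVecLin_apply]
  have hQQ : ∀ (Sf : Finset (Fin N)) (y : Fin N → ℝ),
      (QS Sf *ᵥ y) ⬝ᵥ (QS Sf *ᵥ y) = y ⬝ᵥ (QS Sf *ᵥ y) := by
    intro Sf y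
    rw [Matrix.dotProduct_mulVec, Matrix.vecMul_mulVec, hQsym Sf, hQidem Sf,
      ← Matrix.dotProduct_mulVec]
  have hcontr : ∀ (Sf : Finset (Fin N)) (y : Fin N → ℝ), y ⬝ᵥ (QS Sf *ᵥ y) ≤ y ⬝ᵥ y := by
    intro Sf y
    have hp : 0 ≤ y ⬝ᵥ (Pr Sf *ᵥ y) := by
      have h := (hPrPsd Sf).dotProduct_mulVec_nonneg y
      rwa [hstar] at h
    have hsub : y ⬝ᵥ (QS Sf *ᵥ y) = y ⬝ᵥ y - y ⬝ᵥ (Pr Sf *ᵥ y) := by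
      show y ⬝ᵥ ((1 - Pr Sf) *ᵥ y) = y ⬝ᵥ y - y ⬝ᵥ (Pr Sf *ᵥ y)
      rw [Matrix.sub_mulVec, dotProduct_sub, Matrix.one_mulVec]
    linarith
  have bound1 : ∀ j, (1/(N:ℝ)^k) * ∑ v : Fin k → Fin N, lam j * q j v ≤ ((N:ℝ) - lam j)/k := by
    intro j
    set sq : ℝ := Real.sqrt (lam j) with hsqdef
    set x : Fin N → ℝ := sq • u j with hxdef
    set w : (Fin k → Fin N) → (Fin N → ℝ) :=
      fun v => ((N:ℝ)/k) • ∑ m : Fin k, (u j (v m)) • (fun i => B i (v m)) with hwdef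
    -- pointwise inequality
    have stepA : ∀ v : Fin k → Fin N, lam j * q j v ≤ (x - w v) ⬝ᵥ (x - w v) := by
      intro v
      set Sf := Finset.image v Finset.univ with hSf
      have a1 : QS Sf *ᵥ w v = 0 := by
        rw [hwdef]
        show QS Sf *ᵥ (((N:ℝ)/k) • ∑ m : Fin k, (u j (v m)) • (fun i => B i (v m))) = 0
        rw [Matrix.mulVec_smul, mv_sum]
        have hz : ∀ m : Fin k, QS Sf *ᵥ ((u j (v m)) • (fun i => B i (v m))) = 0 := by
          intro m
          rw [Matrix.mulVec_smul, hQb Sf (v m) (Finset.mem_image_of_mem v (Finset.mem_univ m)),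
            smul_zero]
        rw [Finset.sum_congr rfl fun m _ => hz m]
        simp
      have a2 : QS Sf *ᵥ (x - w v) = QS Sf *ᵥ x := by
        rw [Matrix.mulVec_sub, a1, sub_zero]
      have a3 : lam j * q j v = (QS Sf *ᵥ x) ⬝ᵥ (QS Sf *ᵥ x) := by
        have hx1 : QS Sf *ᵥ x = sq • (QS Sf *ᵥ u j) := by
          rw [hxdef, Matrix.mulVec_smul]
        rw [hx1, smul_dotProduct, dotProduct_smul, smul_eq_mul, smul_eq_mul, ← mul_assoc,
          hsqdef, hsq j, hQQ Sf (u j)]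
      calc lam j * q j v = (QS Sf *ᵥ x) ⬝ᵥ (QS Sf *ᵥ x) := a3
      _ = (QS Sf *ᵥ (x - w v)) ⬝ᵥ (QS Sf *ᵥ (x - w v)) := by rw [a2]
      _ = (x - w v) ⬝ᵥ (QS Sf *ᵥ (x - w v)) := hQQ Sf (x - w v)
      _ ≤ (x - w v) ⬝ᵥ (x - w v) := hcontr Sf (x - w v)
    -- scalar ingredients
    have hwv : ∀ v i, w v i = ((N:ℝ)/k) * ∑ m, u j (v m) * B i (v m) := by
      intro v i
      rw [hwdef]
      simp only [Pi.smul_apply, Finset.sum_apply, smul_eq_mul]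
    have hsq' : sq * sq = lam j := by rw [hsqdef]; exact hsq j
    have hT0 : ∑ i, x i * x i = lam j := by
      have h : ∀ i, x i * x i = sq * (sq * (u j i * u j i)) := fun i => by
        rw [hxdef]; simp only [Pi.smul_apply, smul_eq_mul]; ring
      rw [Finset.sum_congr rfl fun i _ => h i, ← Finset.mul_sum, ← Finset.mul_sum, hgg j,
        mul_one, hsq']
    have hBx : ∀ t, ∑ i, x i * B i t = lam j * u j t := by
      intro t
      have h : ∀ i, x i * B i t = sq * (u j i * B i t) := fun i => by
        rw [hxdef]; simp only [Pi.smul_apply, smul_eq_mul]; ring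
      rw [Finset.sum_congr rfl fun i _ => h i, ← Finset.mul_sum, hBu j t, ← mul_assoc, hsq']
    have hBB2 : ∀ s t, ∑ i, B i s * B i t = A s t := by
      intro s t
      calc ∑ i, B i s * B i t = ∑ i, B s i * B i t := by
            exact Finset.sum_congr rfl fun i _ => by rw [hBe i s]
      _ = A s t := by rw [← Matrix.mul_apply, hBB]
    -- expansion of the square
    have hsplit : ∀ v, (x - w v) ⬝ᵥ (x - w v)
        = (∑ i, x i * x i) - 2 * (∑ i, x i * w v i) + ∑ i, w v i * w v i := by
      intro v
      show (∑ i, (x - w v) i * (x - w v) i) = _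
      simp only [Pi.sub_apply]
      rw [Finset.sum_congr rfl fun i _ =>
        show (x i - w v i) * (x i - w v i)
            = (x i * x i - 2 * (x i * w v i)) + w v i * w v i from by ring]
      rw [Finset.sum_add_distrib, Finset.sum_sub_distrib, ← Finset.mul_sum]
    have hT1 : ∀ v, ∑ i, x i * w v i
        = ((N:ℝ)/k) * lam j * ∑ m, u j (v m) * u j (v m) := by
      intro v
      calc ∑ i, x i * w v i = ∑ i, ((N:ℝ)/k) * ∑ m, x i * (u j (v m) * B i (v m)) := by
            refine Finset.sum_congr rfl fun i _ => ?_
            rw [hwv v i, Finset.mul_sum, Finset.mul_sum]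
            rw [Finset.mul_sum]
            exact Finset.sum_congr rfl fun m _ => by ring
      _ = ((N:ℝ)/k) * ∑ m, ∑ i, x i * (u j (v m) * B i (v m)) := by
            rw [← Finset.mul_sum]
            rw [Finset.sum_comm]
      _ = ((N:ℝ)/k) * ∑ m, u j (v m) * (lam j * u j (v m)) := by
            congr 1
            refine Finset.sum_congr rfl fun m _ => ?_
            calc ∑ i, x i * (u j (v m) * B i (v m))
                = u j (v m) * ∑ i, x i * B i (v m) := by
                  rw [Finset.mul_sum]
                  exact Finset.sum_congr rfl fun i _ => by ring
            _ = u j (v m) * (lam j * u j (v m)) := by rw [hBx (v m)]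
      _ = ((N:ℝ)/k) * lam j * ∑ m, u j (v m) * u j (v m) := by
            simp only [mul_assoc, Finset.mul_sum]
            exact Finset.sum_congr rfl fun m _ => by ring
    have hT2 : ∀ v, ∑ i, w v i * w v i
        = ((N:ℝ)/k)^2 * ∑ m, ∑ m', u j (v m) * u j (v m') * A (v m) (v m') := by
      intro v
      calc ∑ i, w v i * w v i
          = ∑ i, ((N:ℝ)/k)^2 * ∑ m, ∑ m', u j (v m) * u j (v m') * (B i (v m) * B i (v m')) := by
            refine Finset.sum_congr rfl fun i _ => ?_
            rw [hwv v i]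
            rw [show (((N:ℝ)/k) * ∑ m, u j (v m) * B i (v m))
                  * (((N:ℝ)/k) * ∑ m, u j (v m) * B i (v m))
                = ((N:ℝ)/k)^2 * ((∑ m, u j (v m) * B i (v m))
                  * (∑ m', u j (v m') * B i (v m'))) from by ring]
            rw [Finset.sum_mul_sum]
            simp only [Finset.mul_sum]
            exact Finset.sum_congr rfl fun m _ => Finset.sum_congr rfl fun m' _ => by ring
      _ = ((N:ℝ)/k)^2 * ∑ m, ∑ m', ∑ i, u j (v m) * u j (v m') * (B i (v m) * B i (v m')) := by
            rw [← Finset.mul_sum]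
            congr 1
            rw [Finset.sum_comm]
            refine Finset.sum_congr rfl fun m _ => ?_
            rw [Finset.sum_comm]
      _ = ((N:ℝ)/k)^2 * ∑ m, ∑ m', u j (v m) * u j (v m') * A (v m) (v m') := by
            congr 1
            refine Finset.sum_congr rfl fun m _ => Finset.sum_congr rfl fun m' _ => ?_
            calc ∑ i, u j (v m) * u j (v m') * (B i (v m) * B i (v m'))
                = u j (v m) * u j (v m') * ∑ i, B i (v m) * B i (v m') := by
                  rw [Finset.mul_sum]
            _ = u j (v m) * u j (v m') * A (v m) (v m') := by rw [hBB2]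
    -- expectations
    have E1 : ∑ v : Fin k → Fin N, ∑ m, u j (v m) * u j (v m) = k * (N:ℝ)^(k-1) := by
      rw [Finset.sum_comm]
      have : ∀ m : Fin k, ∑ v : Fin k → Fin N, u j (v m) * u j (v m) = (N:ℝ)^(k-1) := by
        intro m
        rw [sum_eval m (fun t => u j t * u j t), hgg j, mul_one, Fintype.card_fin]
      rw [Finset.sum_congr rfl fun m _ => this m, Finset.sum_const]
      simp only [Finset.card_univ, Fintype.card_fun, Fintype.card_fin, nsmul_eq_mul]
    have E2 : ∑ v : Fin k → Fin N, ∑ m, ∑ m', u j (v m) * u j (v m') * A (v m) (v m')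
        = k * ((N:ℝ)^(k-1) + ((k:ℝ) - 1) * (N:ℝ)^(k-2) * lam j) := by
      rw [Finset.sum_comm]
      have hswap : ∀ m : Fin k, ∑ v : Fin k → Fin N, ∑ m', u j (v m) * u j (v m') * A (v m) (v m')
          = ∑ m' : Fin k, ∑ v : Fin k → Fin N, u j (v m) * u j (v m') * A (v m) (v m') :=
        fun m => Finset.sum_comm
      rw [Finset.sum_congr rfl fun m _ => hswap m]
      have hper : ∀ m : Fin k, ∑ m' : Fin k, ∑ v : Fin k → Fin N,
          u j (v m) * u j (v m') * A (v m) (v m')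
          = (N:ℝ)^(k-1) + ((k:ℝ) - 1) * (N:ℝ)^(k-2) * lam j := by
        intro m
        rw [← Finset.add_sum_erase Finset.univ _ (Finset.mem_univ m)]
        have hdiagm : ∑ v : Fin k → Fin N, u j (v m) * u j (v m) * A (v m) (v m)
            = (N:ℝ)^(k-1) := by
          rw [sum_eval m (fun t => u j t * u j t * A t t)]
          have : ∀ t, u j t * u j t * A t t = u j t * u j t := fun t => by rw [hdiag t, mul_one]
          rw [Finset.sum_congr rfl fun t _ => this t, hgg j, mul_one, Fintype.card_fin]
        have hoff : ∀ m' ∈ Finset.univ.erase m, ∑ v : Fin k → Fin N,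
            u j (v m) * u j (v m') * A (v m) (v m') = (N:ℝ)^(k-2) * lam j := by
          intro m' hm'
          have hne : m ≠ m' := (Finset.mem_erase.mp hm').1.symm
          rw [sum_eval2 m m' hne (fun s t => u j s * u j t * A s t), hgAg j]
        rw [hdiagm, Finset.sum_congr rfl hoff, Finset.sum_const, Finset.card_erase_of_mem
          (Finset.mem_univ m)]
        simp only [Finset.card_univ, Fintype.card_fin, nsmul_eq_mul]
        rw [Nat.cast_sub hk]
        push_cast
        ring
      rw [Finset.sum_congr rfl fun m _ => hper m, Finset.sum_const]
      simp only [Finset.card_univ, Fintype.card_fun, Fintype.card_fin, nsmul_eq_mul]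
    -- total expectation
    have Etot : ∑ v : Fin k → Fin N, (x - w v) ⬝ᵥ (x - w v)
        = (N:ℝ)^k * lam j - 2 * (((N:ℝ)/k) * lam j) * (k * (N:ℝ)^(k-1))
          + ((N:ℝ)/k)^2 * (k * ((N:ℝ)^(k-1) + ((k:ℝ) - 1) * (N:ℝ)^(k-2) * lam j)) := by
      rw [Finset.sum_congr rfl fun v _ => by rw [hsplit v, hT0, hT1 v, hT2 v]]
      rw [Finset.sum_add_distrib, Finset.sum_sub_distrib, Finset.sum_const, ← Finset.mul_sum,
        ← Finset.mul_sum, ← Finset.mul_sum, E1, E2]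
      simp only [Fintype.card_fun, Fintype.card_fin, Finset.card_univ, nsmul_eq_mul,
        Nat.cast_pow]
      ring
    -- put it together
    have hle : ∑ v : Fin k → Fin N, lam j * q j v ≤ ∑ v : Fin k → Fin N, (x - w v) ⬝ᵥ (x - w v) :=
      Finset.sum_le_sum fun v _ => stepA v
    have harith : (1/(N:ℝ)^k) * ((N:ℝ)^k * lam j - 2 * (((N:ℝ)/k) * lam j) * (k * (N:ℝ)^(k-1))
          + ((N:ℝ)/k)^2 * (k * ((N:ℝ)^(k-1) + ((k:ℝ) - 1) * (N:ℝ)^(k-2) * lam j)))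
        = ((N:ℝ) - lam j)/k := by
      rcases Nat.lt_or_ge k 2 with hk2 | hk2
      · have hk1 : k = 1 := by omega
        subst hk1
        norm_num
        field_simp
        ring
      · have e1 : (N:ℝ)^(k-1) = (N:ℝ)^(k-2) * N := by
          rw [← pow_succ]
          congr 1
          omega
        have e2 : (N:ℝ)^k = (N:ℝ)^(k-2) * N^2 := by
          rw [← pow_add]
          congr 1
          omega
        have ht : (0:ℝ) < (N:ℝ)^(k-2) := pow_pos hNR _
        rw [e1, e2]
        field_simp
        ring
    calc (1/(N:ℝ)^k) * ∑ v : Fin k → Fin N, lam j * q j v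
        ≤ (1/(N:ℝ)^k) * ∑ v : Fin k → Fin N, (x - w v) ⬝ᵥ (x - w v) := by
          apply mul_le_mul_of_nonneg_left hle (by positivity)
    _ = ((N:ℝ) - lam j)/k := by rw [Etot, harith]
  have bound2 : ∀ j, (1/(N:ℝ)^k) * ∑ v : Fin k → Fin N, lam j * q j v ≤ lam j := by
    intro j
    have hsum : ∑ v : Fin k → Fin N, lam j * q j v ≤ ∑ v : Fin k → Fin N, lam j :=
      Finset.sum_le_sum fun v _ => by
        have := hq1 j v
        nlinarith [hlam0 j, hq0 j v]
    have hcard : ∑ v : Fin k → Fin N, lam j = (N:ℝ)^k * lam j := by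
      rw [Finset.sum_const]
      simp only [Fintype.card_fun, Fintype.card_fin, Finset.card_univ, nsmul_eq_mul,
        Nat.cast_pow]
    calc (1/(N:ℝ)^k) * ∑ v : Fin k → Fin N, lam j * q j v
        ≤ (1/(N:ℝ)^k) * ((N:ℝ)^k * lam j) := by
          apply mul_le_mul_of_nonneg_left _ (by positivity)
          rw [← hcard]; exact hsum
    _ = lam j := by field_simp
  have hLHS : (1 / (N : ℝ) ^ k) * ∑ v : Fin k → Fin N,
        (A - subCols A (Finset.image v Finset.univ) * P (Finset.image v Finset.univ) *
          subRows A (Finset.image v Finset.univ)).trace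
      = ∑ j, (1/(N:ℝ)^k) * ∑ v : Fin k → Fin N, lam j * q j v := by
    have h1 : ∀ v : Fin k → Fin N,
        (A - subCols A (Finset.image v Finset.univ) * P (Finset.image v Finset.univ) *
          subRows A (Finset.image v Finset.univ)).trace = ∑ j, lam j * q j v := by
      intro v
      rw [htr, hexp]
    rw [Finset.sum_congr rfl fun v _ => h1 v, Finset.sum_comm, Finset.mul_sum]
  rw [hLHS]
  -- ## choose the optimal index set and conclude
  by_cases hrN : r ≤ N
  · -- main case : r ≤ N
    have hne : Nonempty {s : Finset (Fin N) // s.card = r} := by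
      obtain ⟨J, hJ1, hJ2⟩ := Finset.exists_subset_card_eq (s := (Finset.univ : Finset (Fin N))) (n := r)
        (by simpa using hrN)
      exact ⟨⟨J, hJ2⟩⟩
    obtain ⟨Jmax, hJmax⟩ :=
      Finite.exists_max (fun s : {s : Finset (Fin N) // s.card = r} => ∑ i ∈ s.1, lam i)
    set J : Finset (Fin N) := Jmax.1 with hJdef
    have hJcard : J.card = r := Jmax.2
    set T : ℝ := ∑ i ∈ J, lam i with hTdef
    have hsup : sumTopEig A r = T := by
      have hbdd : BddAbove (Set.range
          (fun s : {s : Finset (Fin N) // s.card = r} => ∑ i ∈ s.1, lam i)) :=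
        Set.Finite.bddAbove (Set.finite_range _)
      rw [sumTopEig, dif_pos hH]
      apply le_antisymm
      · exact ciSup_le (α := ℝ) fun s => hJmax s
      · exact le_ciSup hbdd Jmax
    have hsplitJ : ∑ j, (1/(N:ℝ)^k) * ∑ v : Fin k → Fin N, lam j * q j v
        = ∑ j ∈ Finset.univ \ J, (1/(N:ℝ)^k) * ∑ v : Fin k → Fin N, lam j * q j v
          + ∑ j ∈ J, (1/(N:ℝ)^k) * ∑ v : Fin k → Fin N, lam j * q j v :=
      (Finset.sum_sdiff (Finset.subset_univ J)).symm
    have h1 : ∑ j ∈ J, (1/(N:ℝ)^k) * ∑ v : Fin k → Fin N, lam j * q j v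
        ≤ ∑ j ∈ J, ((N:ℝ) - lam j)/k := Finset.sum_le_sum fun j _ => bound1 j
    have h2 : ∑ j ∈ Finset.univ \ J, (1/(N:ℝ)^k) * ∑ v : Fin k → Fin N, lam j * q j v
        ≤ ∑ j ∈ Finset.univ \ J, lam j := Finset.sum_le_sum fun j _ => bound2 j
    have h3 : ∑ j ∈ J, ((N:ℝ) - lam j)/k = ((r:ℝ) * N - T)/k := by
      rw [← Finset.sum_div]
      congr 1
      rw [Finset.sum_sub_distrib, Finset.sum_const, hJcard, nsmul_eq_mul, ← hTdef]
    have h4 : ∑ j ∈ Finset.univ \ J, lam j = (N:ℝ) - T := by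
      have hs := Finset.sum_sdiff (f := lam) (Finset.subset_univ J)
      rw [hsumlam] at hs
      rw [← hTdef] at hs
      linarith
    rw [tailSum, hsup, htrA, hsplitJ]
    have hkne : (k:ℝ) ≠ 0 := ne_of_gt hkR
    have hfinal : ((r:ℝ) * N - T)/k + ((N:ℝ) - T)
        = ((r:ℝ) - 1)/k * N + (1 + 1/(k:ℝ)) * ((N:ℝ) - T) := by
      field_simp
      ring
    calc ∑ j ∈ Finset.univ \ J, (1/(N:ℝ)^k) * ∑ v : Fin k → Fin N, lam j * q j v
          + ∑ j ∈ J, (1/(N:ℝ)^k) * ∑ v : Fin k → Fin N, lam j * q j v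
        ≤ ((N:ℝ) - T) + ((r:ℝ) * N - T)/k := by
          have := le_trans h2 (le_of_eq h4)
          have := le_trans h1 (le_of_eq h3)
          linarith
    _ = ((r:ℝ) - 1)/k * N + (1 + 1/(k:ℝ)) * ((N:ℝ) - T) := by rw [← hfinal]; ring
  · -- degenerate case : r > N
    have hempty : IsEmpty {s : Finset (Fin N) // s.card = r} := by
      constructor
      rintro ⟨s, hs⟩
      have hle := Finset.card_le_univ s
      rw [Fintype.card_fin] at hle
      omega
    have hsup : sumTopEig A r = 0 := by
      rw [sumTopEig, dif_pos hH]
      exact Real.iSup_of_isEmpty _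
    have hbig : ∑ j, (1/(N:ℝ)^k) * ∑ v : Fin k → Fin N, lam j * q j v ≤ (N:ℝ) := by
      calc ∑ j, (1/(N:ℝ)^k) * ∑ v : Fin k → Fin N, lam j * q j v ≤ ∑ j, lam j :=
            Finset.sum_le_sum fun j _ => bound2 j
      _ = (N:ℝ) := hsumlam
    rw [tailSum, hsup, htrA]
    have hrR : (1:ℝ) ≤ (r:ℝ) := by exact_mod_cast hr
    have h5 : (0:ℝ) ≤ ((r:ℝ) - 1)/k * N :=
      mul_nonneg (div_nonneg (by linarith) (le_of_lt hkR)) (le_of_lt hNR)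
    have h6 : (N:ℝ) ≤ (1 + 1/(k:ℝ)) * ((N:ℝ) - 0) := by
      rw [sub_zero]
      nlinarith [one_div_pos.mpr hkR, hNR]
    linarith
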